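/- arXiv:1403.3079 — 2 statements merged into one kernel-verified Lean document; each statement's English description precedes it below -/
import Mathlib

section
/- Let G be a simple graph on a vertex set V and let M be the doubled graph of G on V × Bool. Suppose u₁, u₂, u₃ ∈ V are distinct vertices with u₁ adjacent to u₂, u₁ adjacent to u₃, and u₂ not adjacent to u₃ in G, and suppose v₁, v₂, v₃ ∈ V are distinct and pairwise adjacent in G. Then the induced subgraph of M on {u₁, u₂, u₃} × Bool is not isomorphic to the induced subgraph of M on {v₁, v₂, v₃} × Bool. -/
/-- The doubled graph of a simple graph `G` on `V`: its vertex set is `V × Bool`, and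
`(a, i)` is adjacent to `(b, j)` iff either `i = j` and `a` is adjacent to `b` in `G`,
or `i ≠ j` and `a` is not adjacent to `b` in `G`. -/
def doubled {V : Type*} (G : SimpleGraph V) : SimpleGraph (V × Bool) where
  Adj u v := (u.2 = v.2 ∧ G.Adj u.1 v.1) ∨ (u.2 ≠ v.2 ∧ ¬ G.Adj u.1 v.1)
  symm := by
    constructor
    intro u v h
    rcases h with ⟨h1, h2⟩ | ⟨h1, h2⟩
    · exact Or.inl ⟨h1.symm, h2.symm⟩
    · exact Or.inr ⟨h1.symm, fun h => h2 h.symm⟩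
  loopless := by
    constructor
    intro u h
    rcases h with ⟨_, h2⟩ | ⟨h1, _⟩
    · exact G.loopless.irrefl _ h2
    · exact h1 rfl

/-- For a vertex `u = (a, i)` of the doubled graph, `prime u` is the vertex `(a, ¬i)`. -/
def prime {V : Type*} (u : V × Bool) : V × Bool := (u.1, !u.2)

/-- A simple graph `G` on `V` has the extension property if for all finite disjoint sets
`A, B ⊆ V` there is a vertex `c ∉ A ∪ B` adjacent to every vertex of `A` and to no vertex
of `B`. -/
def ExtensionProperty {V : Type*} (G : SimpleGraph V) : Prop :=
  ∀ A B : Finset V, Disjoint A B →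
    ∃ c, c ∉ A ∧ c ∉ B ∧ (∀ a ∈ A, G.Adj c a) ∧ ∀ b ∈ B, ¬ G.Adj c b

private lemma doubled_color {V : Type*} (G : SimpleGraph V) (u₁ u₂ u₃ : V)
    (hu12 : u₁ ≠ u₂) (hu13 : u₁ ≠ u₃) (hu23 : u₂ ≠ u₃)
    (au12 : G.Adj u₁ u₂) (au13 : G.Adj u₁ u₃) (au23 : ¬ G.Adj u₂ u₃)
    (f : V × Bool → Bool)
    (hf1 : ∀ i, f (u₁, i) = i) (hf2 : ∀ i, f (u₂, i) = !i) (hf3 : ∀ i, f (u₃, i) = !i)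
    (a : V) (i : Bool) (b : V) (j : Bool)
    (ha : a ∈ ({u₁, u₂, u₃} : Set V)) (hb : b ∈ ({u₁, u₂, u₃} : Set V))
    (hadj : (doubled G).Adj (a, i) (b, j)) :
    f (a, i) ≠ f (b, j) := by
  simp only [Set.mem_insert_iff, Set.mem_singleton_iff] at ha hb
  obtain rfl | rfl | rfl := ha <;> obtain rfl | rfl | rfl := hb <;>
    cases i <;> cases j <;>
    rcases hadj with ⟨h1, h2⟩ | ⟨h1, h2⟩ <;>
    simp_all [hf1, hf2, hf3, hu12, hu13, hu23, Ne.symm hu12, Ne.symm hu13, Ne.symm hu23,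
      au12.symm, au13.symm, fun h => au23 (G.adj_symm h)]
  all_goals exact absurd h2.symm au23

/-- If `u₁, u₂, u₃` are distinct vertices of `G` with `u₁ ~ u₂`, `u₁ ~ u₃` and `u₂ ≁ u₃`,
and `v₁, v₂, v₃` are distinct pairwise adjacent vertices of `G`, then the induced subgraphs
of the doubled graph `M` on `{u₁, u₂, u₃} × Bool` and on `{v₁, v₂, v₃} × Bool` are not
isomorphic. -/
theorem statement12 {V : Type*} (G : SimpleGraph V) (u₁ u₂ u₃ v₁ v₂ v₃ : V)
    (hu12 : u₁ ≠ u₂) (hu13 : u₁ ≠ u₃) (hu23 : u₂ ≠ u₃)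
    (hv12 : v₁ ≠ v₂) (hv13 : v₁ ≠ v₃) (hv23 : v₂ ≠ v₃)
    (au12 : G.Adj u₁ u₂) (au13 : G.Adj u₁ u₃) (au23 : ¬ G.Adj u₂ u₃)
    (av12 : G.Adj v₁ v₂) (av13 : G.Adj v₁ v₃) (av23 : G.Adj v₂ v₃) :
    IsEmpty
      ((doubled G).induce (({u₁, u₂, u₃} : Set V) ×ˢ (Set.univ : Set Bool)) ≃g
        (doubled G).induce (({v₁, v₂, v₃} : Set V) ×ˢ (Set.univ : Set Bool))) := by
  constructor
  intro e
  classical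
  set f : V × Bool → Bool := fun x => if x.1 = u₁ then x.2 else !x.2 with hfdef
  have hf1 : ∀ i, f (u₁, i) = i := by intro i; simp [hfdef]
  have hf2 : ∀ i, f (u₂, i) = !i := by intro i; simp [hfdef, Ne.symm hu12]
  have hf3 : ∀ i, f (u₃, i) = !i := by intro i; simp [hfdef, Ne.symm hu13]
  have key : ∀ x y : V × Bool, x.1 ∈ ({u₁, u₂, u₃} : Set V) →
      y.1 ∈ ({u₁, u₂, u₃} : Set V) → (doubled G).Adj x y → f x ≠ f y := by
    rintro ⟨a, i⟩ ⟨b, j⟩ ha hb hadj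
    exact doubled_color G u₁ u₂ u₃ hu12 hu13 hu23 au12 au13 au23 f hf1 hf2 hf3
      a i b j ha hb hadj
  have m1 : ((v₁, false) : V × Bool) ∈ ({v₁, v₂, v₃} : Set V) ×ˢ (Set.univ : Set Bool) := by simp
  have m2 : ((v₂, false) : V × Bool) ∈ ({v₁, v₂, v₃} : Set V) ×ˢ (Set.univ : Set Bool) := by simp
  have m3 : ((v₃, false) : V × Bool) ∈ ({v₁, v₂, v₃} : Set V) ×ˢ (Set.univ : Set Bool) := by simp
  let p₁ : ↥(({v₁, v₂, v₃} : Set V) ×ˢ (Set.univ : Set Bool)) := ⟨(v₁, false), m1⟩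
  let p₂ : ↥(({v₁, v₂, v₃} : Set V) ×ˢ (Set.univ : Set Bool)) := ⟨(v₂, false), m2⟩
  let p₃ : ↥(({v₁, v₂, v₃} : Set V) ×ˢ (Set.univ : Set Bool)) := ⟨(v₃, false), m3⟩
  have a12 : ((doubled G).induce (({v₁, v₂, v₃} : Set V) ×ˢ (Set.univ : Set Bool))).Adj p₁ p₂ :=
    Or.inl ⟨rfl, av12⟩
  have a13 : ((doubled G).induce (({v₁, v₂, v₃} : Set V) ×ˢ (Set.univ : Set Bool))).Adj p₁ p₃ :=
    Or.inl ⟨rfl, av13⟩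
  have a23 : ((doubled G).induce (({v₁, v₂, v₃} : Set V) ×ˢ (Set.univ : Set Bool))).Adj p₂ p₃ :=
    Or.inl ⟨rfl, av23⟩
  have b12 := e.symm.map_adj_iff.mpr a12
  have b13 := e.symm.map_adj_iff.mpr a13
  have b23 := e.symm.map_adj_iff.mpr a23
  have mem1 := ((e.symm p₁).2 : ((e.symm p₁ : V × Bool)) ∈ _)
  have mem2 := ((e.symm p₂).2 : ((e.symm p₂ : V × Bool)) ∈ _)
  have mem3 := ((e.symm p₃).2 : ((e.symm p₃ : V × Bool)) ∈ _)
  have k12 := key _ _ mem1.1 mem2.1 b12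
  have k13 := key _ _ mem1.1 mem3.1 b13
  have k23 := key _ _ mem2.1 mem3.1 b23
  revert k12 k13 k23
  cases hb1 : f (e.symm p₁ : V × Bool) <;> cases hb2 : f (e.symm p₂ : V × Bool) <;>
    cases hb3 : f (e.symm p₃ : V × Bool) <;> simp [hb1, hb2, hb3]
end

section
/- Let G be a simple graph on a vertex set V and let M be the doubled graph of G on V × Bool. Suppose u₁, u₂, u₃ ∈ V are distinct vertices with u₁ adjacent to u₂, u₁ adjacent to u₃, and u₂ not adjacent to u₃ in G, and suppose v₁, v₂, v₃ ∈ V are distinct and pairwise adjacent in G. Then there is no automorphism σ of M such that σ maps {uᵢ} × Bool onto {vᵢ} × Bool for each i = 1, 2, 3. (Together with the transitivity of Aut(M) on pairs of distinct classes when G has the extension property, this shows that the type of a triple of classes of the equivalence relation identifying (a,0) with (a,1) is not determined by the types of its sub-pairs.) -/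
/-- If `u₁, u₂, u₃` are distinct vertices of `G` with `u₁ ~ u₂`, `u₁ ~ u₃` and `u₂ ≁ u₃`,
and `v₁, v₂, v₃` are distinct pairwise adjacent vertices of `G`, then no automorphism of the
doubled graph `M` maps `{uᵢ} × Bool` onto `{vᵢ} × Bool` for each `i = 1, 2, 3`. -/
theorem statement13 {V : Type*} (G : SimpleGraph V) (u₁ u₂ u₃ v₁ v₂ v₃ : V)
    (hu12 : u₁ ≠ u₂) (hu13 : u₁ ≠ u₃) (hu23 : u₂ ≠ u₃)
    (hv12 : v₁ ≠ v₂) (hv13 : v₁ ≠ v₃) (hv23 : v₂ ≠ v₃)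
    (au12 : G.Adj u₁ u₂) (au13 : G.Adj u₁ u₃) (au23 : ¬ G.Adj u₂ u₃)
    (av12 : G.Adj v₁ v₂) (av13 : G.Adj v₁ v₃) (av23 : G.Adj v₂ v₃) :
    ¬ ∃ σ : (doubled G) ≃g (doubled G),
        (fun u => σ u) '' (({u₁} : Set V) ×ˢ (Set.univ : Set Bool)) =
          ({v₁} : Set V) ×ˢ (Set.univ : Set Bool) ∧
        (fun u => σ u) '' (({u₂} : Set V) ×ˢ (Set.univ : Set Bool)) =
          ({v₂} : Set V) ×ˢ (Set.univ : Set Bool) ∧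
        (fun u => σ u) '' (({u₃} : Set V) ×ˢ (Set.univ : Set Bool)) =
          ({v₃} : Set V) ×ˢ (Set.univ : Set Bool) := by
  rintro ⟨σ, h1, h2, h3⟩
  -- first coordinates of images
  have mem : ∀ (u v : V), (fun x => σ x) '' (({u} : Set V) ×ˢ (Set.univ : Set Bool)) =
      ({v} : Set V) ×ˢ (Set.univ : Set Bool) → ∀ i : Bool, (σ (u, i)).1 = v := by
    intro u v h i
    have : σ (u, i) ∈ ({v} : Set V) ×ˢ (Set.univ : Set Bool) := by
      rw [← h]
      exact ⟨(u, i), ⟨rfl, trivial⟩, rfl⟩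
    exact this.1
  have f1 := mem u₁ v₁ h1
  have f2 := mem u₂ v₂ h2
  have f3 := mem u₃ v₃ h3
  -- adjacency transfer
  have madj : ∀ x y, (doubled G).Adj (σ x) (σ y) ↔ (doubled G).Adj x y :=
    fun x y => σ.map_adj_iff
  -- edge (u₁,false)-(u₂,false)
  have e12 : (doubled G).Adj (σ (u₁, false)) (σ (u₂, false)) := by
    rw [madj]; exact Or.inl ⟨rfl, au12⟩
  have e13 : (doubled G).Adj (σ (u₁, false)) (σ (u₃, false)) := by
    rw [madj]; exact Or.inl ⟨rfl, au13⟩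
  have e23 : (doubled G).Adj (σ (u₂, false)) (σ (u₃, true)) := by
    rw [madj]; exact Or.inr ⟨Bool.false_ne_true, au23⟩
  have b12 : (σ (u₁, false)).2 = (σ (u₂, false)).2 := by
    rcases e12 with ⟨h, _⟩ | ⟨_, hn⟩
    · exact h
    · exact absurd (f1 false ▸ f2 false ▸ av12) hn
  have b13 : (σ (u₁, false)).2 = (σ (u₃, false)).2 := by
    rcases e13 with ⟨h, _⟩ | ⟨_, hn⟩
    · exact h
    · exact absurd (f1 false ▸ f3 false ▸ av13) hn
  have b23 : (σ (u₂, false)).2 = (σ (u₃, true)).2 := by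
    rcases e23 with ⟨h, _⟩ | ⟨_, hn⟩
    · exact h
    · exact absurd (f2 false ▸ f3 true ▸ av23) hn
  -- σ(u₃,false) ≠ σ(u₃,true) but same first coordinate
  have hne : σ (u₃, false) ≠ σ (u₃, true) := by
    intro h
    have := σ.injective h
    simp at this
  have : (σ (u₃, false)).2 ≠ (σ (u₃, true)).2 := by
    intro h
    exact hne (Prod.ext ((f3 false).trans (f3 true).symm) h)
  exact this (b13.symm.trans (b12.trans b23))
end
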